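/- For a constant a ≠ 0, the function U(t,x) = a − 12a(z⁴ + (3/(2a²))z² − 3/(16a⁴) − 24tz) / (4a²(z³ + 12t − (3/(4a²))z)² + 9(z² + 1/(4a²))²), where z = x − 6a²t, is a solution of U_t + 6U² U_x + U_{xxx} = 0 on the set where the denominator is nonzero. -/

import Mathlib

noncomputable section MKdVAux

/-- numerator polynomial -/
def mkP (a t y : ℝ) : ℝ :=
  (y - 6 * a^2 * t)^4 + (3 / (2 * a^2)) * (y - 6 * a^2 * t)^2
    - 3 / (16 * a^4) - 24 * t * (y - 6 * a^2 * t)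
def mkP1 (a t y : ℝ) : ℝ :=
  4 * (y - 6 * a^2 * t)^3 + (3 / a^2) * (y - 6 * a^2 * t) - 24 * t
def mkP2 (a t y : ℝ) : ℝ := 12 * (y - 6 * a^2 * t)^2 + 3 / a^2
def mkP3 (a t y : ℝ) : ℝ := 24 * (y - 6 * a^2 * t)
def mkG (a t y : ℝ) : ℝ :=
  (y - 6 * a^2 * t)^3 + 12 * t - (3 / (4 * a^2)) * (y - 6 * a^2 * t)
def mkG1 (a t y : ℝ) : ℝ := 3 * (y - 6 * a^2 * t)^2 - 3 / (4 * a^2)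
def mkH (a t y : ℝ) : ℝ := (y - 6 * a^2 * t)^2 + 1 / (4 * a^2)
def mkH1 (a t y : ℝ) : ℝ := 2 * (y - 6 * a^2 * t)
def mkQ (a t y : ℝ) : ℝ := 4 * a^2 * (mkG a t y)^2 + 9 * (mkH a t y)^2
def mkQ1 (a t y : ℝ) : ℝ :=
  4 * a^2 * (2 * (mkG a t y * mkG1 a t y)) + 9 * (2 * (mkH a t y * mkH1 a t y))
def mkQ2 (a t y : ℝ) : ℝ :=
  4 * a^2 * (2 * ((mkG1 a t y)^2 + mkG a t y * (6 * (y - 6 * a^2 * t))))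
    + 9 * (2 * ((mkH1 a t y)^2 + mkH a t y * 2))
def mkQ3 (a t y : ℝ) : ℝ :=
  4 * a^2 * (2 * (18 * (mkG1 a t y * (y - 6 * a^2 * t)) + 6 * mkG a t y))
    + 9 * (2 * (6 * mkH1 a t y))
def mkN1 (a t y : ℝ) : ℝ := mkP1 a t y * mkQ a t y - mkP a t y * mkQ1 a t y
def mkN1d (a t y : ℝ) : ℝ := mkP2 a t y * mkQ a t y - mkP a t y * mkQ2 a t y
def mkN1dd (a t y : ℝ) : ℝ :=
  mkP3 a t y * mkQ a t y + mkP2 a t y * mkQ1 a t y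
    - mkP1 a t y * mkQ2 a t y - mkP a t y * mkQ3 a t y
def mkN2 (a t y : ℝ) : ℝ := mkN1d a t y * mkQ a t y - 2 * (mkN1 a t y * mkQ1 a t y)
def mkN2d (a t y : ℝ) : ℝ :=
  mkN1dd a t y * mkQ a t y + mkN1d a t y * mkQ1 a t y
    - 2 * (mkN1d a t y * mkQ1 a t y + mkN1 a t y * mkQ2 a t y)
def mkN3 (a t y : ℝ) : ℝ := mkN2d a t y * mkQ a t y - 3 * (mkN2 a t y * mkQ1 a t y)
def mkF1 (a t y : ℝ) : ℝ := -(12 * a * mkN1 a t y / (mkQ a t y)^2)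
def mkF2 (a t y : ℝ) : ℝ := -(12 * a * mkN2 a t y / (mkQ a t y)^3)

lemma hD_base (a t y : ℝ) : HasDerivAt (fun y : ℝ => y - 6 * a^2 * t) 1 y :=
  (hasDerivAt_id y).sub_const _

lemma hD_P (a t y : ℝ) : HasDerivAt (mkP a t) (mkP1 a t y) y := by
  have h1 := hD_base a t y
  unfold mkP
  have h := (((h1.pow 4).add ((h1.pow 2).const_mul (3 / (2 * a^2)))).sub_const
    (3 / (16 * a^4))).sub (h1.const_mul (24 * t))
  refine h.congr_deriv ?_
  unfold mkP1; ring

lemma hD_P1 (a t y : ℝ) : HasDerivAt (mkP1 a t) (mkP2 a t y) y := by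
  have h1 := hD_base a t y
  unfold mkP1
  have h := (((h1.pow 3).const_mul 4).add (h1.const_mul (3 / a^2))).sub_const (24 * t)
  refine h.congr_deriv ?_
  unfold mkP2; ring

lemma hD_P2 (a t y : ℝ) : HasDerivAt (mkP2 a t) (mkP3 a t y) y := by
  have h1 := hD_base a t y
  unfold mkP2
  have h := ((h1.pow 2).const_mul 12).add_const (3 / a^2)
  refine h.congr_deriv ?_
  unfold mkP3; ring

lemma hD_G (a t y : ℝ) : HasDerivAt (mkG a t) (mkG1 a t y) y := by
  have h1 := hD_base a t y
  unfold mkG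
  have h := ((h1.pow 3).add_const (12 * t)).sub (h1.const_mul (3 / (4 * a^2)))
  refine h.congr_deriv ?_
  unfold mkG1; ring

lemma hD_G1 (a t y : ℝ) : HasDerivAt (mkG1 a t) (6 * (y - 6 * a^2 * t)) y := by
  have h1 := hD_base a t y
  unfold mkG1
  have h := ((h1.pow 2).const_mul 3).sub_const (3 / (4 * a^2))
  refine h.congr_deriv ?_
  ring

lemma hD_H (a t y : ℝ) : HasDerivAt (mkH a t) (mkH1 a t y) y := by
  have h1 := hD_base a t y
  unfold mkH
  have h := (h1.pow 2).add_const (1 / (4 * a^2))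
  refine h.congr_deriv ?_
  unfold mkH1; ring

lemma hD_H1 (a t y : ℝ) : HasDerivAt (mkH1 a t) 2 y := by
  have h1 := hD_base a t y
  unfold mkH1
  have h := h1.const_mul 2
  refine h.congr_deriv ?_
  ring

lemma hD_Q (a t y : ℝ) : HasDerivAt (mkQ a t) (mkQ1 a t y) y := by
  unfold mkQ
  have h := (((hD_G a t y).pow 2).const_mul (4 * a^2)).add
    (((hD_H a t y).pow 2).const_mul 9)
  refine h.congr_deriv ?_
  unfold mkQ1; ring

lemma hD_Q1 (a t y : ℝ) : HasDerivAt (mkQ1 a t) (mkQ2 a t y) y := by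
  unfold mkQ1
  have h := ((((hD_G a t y).mul (hD_G1 a t y)).const_mul 2).const_mul (4 * a^2)).add
    ((((hD_H a t y).mul (hD_H1 a t y)).const_mul 2).const_mul 9)
  refine h.congr_deriv ?_
  unfold mkQ2; ring

lemma hD_Q2 (a t y : ℝ) : HasDerivAt (mkQ2 a t) (mkQ3 a t y) y := by
  have h6u : HasDerivAt (fun y : ℝ => 6 * (y - 6 * a^2 * t)) 6 y := by
    have h := (hD_base a t y).const_mul 6
    refine h.congr_deriv ?_
    ring
  unfold mkQ2
  have h := (((((hD_G1 a t y).pow 2).add ((hD_G a t y).mul h6u)).const_mul 2).const_mul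
      (4 * a^2)).add
    (((((hD_H1 a t y).pow 2).add ((hD_H a t y).mul_const 2)).const_mul 2).const_mul 9)
  refine h.congr_deriv ?_
  unfold mkQ3; ring

lemma hD_N1 (a t y : ℝ) : HasDerivAt (mkN1 a t) (mkN1d a t y) y := by
  unfold mkN1
  have h := ((hD_P1 a t y).mul (hD_Q a t y)).sub ((hD_P a t y).mul (hD_Q1 a t y))
  refine h.congr_deriv ?_
  unfold mkN1d; ring

lemma hD_N1d (a t y : ℝ) : HasDerivAt (mkN1d a t) (mkN1dd a t y) y := by
  unfold mkN1d
  have h := ((hD_P2 a t y).mul (hD_Q a t y)).sub ((hD_P a t y).mul (hD_Q2 a t y))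
  refine h.congr_deriv ?_
  unfold mkN1dd; ring

lemma hD_N2 (a t y : ℝ) : HasDerivAt (mkN2 a t) (mkN2d a t y) y := by
  unfold mkN2
  have h := ((hD_N1d a t y).mul (hD_Q a t y)).sub
    (((hD_N1 a t y).mul (hD_Q1 a t y)).const_mul 2)
  refine h.congr_deriv ?_
  rfl

end MKdVAux

set_option maxRecDepth 1000000 in
set_option maxHeartbeats 10000000 in
/-- Second rational solution of the mKdV equation `U_t + 6U²U_x + U_{xxx} = 0`. -/
theorem stmt_14 (a : ℝ) (ha : a ≠ 0) (U : ℝ → ℝ → ℝ) (z : ℝ → ℝ → ℝ)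
    (hz : ∀ t x, z t x = x - 6 * a^2 * t)
    (hU : ∀ t x, U t x = a - 12 * a * ((z t x)^4 + (3 / (2 * a^2)) * (z t x)^2
        - 3 / (16 * a^4) - 24 * t * z t x)
      / (4 * a^2 * ((z t x)^3 + 12 * t - (3 / (4 * a^2)) * z t x)^2
        + 9 * ((z t x)^2 + 1 / (4 * a^2))^2)) :
    ∀ t x, 4 * a^2 * ((z t x)^3 + 12 * t - (3 / (4 * a^2)) * z t x)^2
        + 9 * ((z t x)^2 + 1 / (4 * a^2))^2 ≠ 0 →
      deriv (fun s => U s x) t + 6 * (U t x)^2 * deriv (U t) x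
        + iteratedDeriv 3 (U t) x = 0 := by
  intro t x hDen
  rw [hz t x] at hDen
  have hQx : mkQ a t x ≠ 0 := by unfold mkQ mkG mkH; exact hDen
  have hUeq : U t = fun y => a - 12 * a * mkP a t y / mkQ a t y := by
    funext y
    rw [hU t y, hz t y]
    unfold mkP mkQ mkG mkH
    rfl
  have hQcont : Continuous fun y => mkQ a t y := by
    unfold mkQ mkG mkH; continuity
  have hSopen : IsOpen {y : ℝ | mkQ a t y ≠ 0} := by
    have he : {y : ℝ | mkQ a t y ≠ 0} = (fun y => mkQ a t y) ⁻¹' ({0}ᶜ) := rfl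
    rw [he]; exact (isOpen_compl_singleton).preimage hQcont
  -- first x-derivative
  have hDU : ∀ y, mkQ a t y ≠ 0 → HasDerivAt (U t) (mkF1 a t y) y := by
    intro y hy
    rw [hUeq]
    have h := (hasDerivAt_const y a).sub
      (((hD_P a t y).const_mul (12 * a)).div (hD_Q a t y) hy)
    refine h.congr_deriv ?_
    unfold mkF1 mkN1
    ring
  have hderiv1 : ∀ y, mkQ a t y ≠ 0 → deriv (U t) y = mkF1 a t y :=
    fun y hy => (hDU y hy).deriv
  -- second x-derivative
  have hDF1 : ∀ y, mkQ a t y ≠ 0 → HasDerivAt (fun w => mkF1 a t w) (mkF2 a t y) y := by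
    intro y hy
    unfold mkF1
    have h := (((hD_N1 a t y).const_mul (12 * a)).div ((hD_Q a t y).pow 2)
      (pow_ne_zero 2 hy)).neg
    refine h.congr_deriv ?_
    unfold mkF2 mkN2
    simp only [Pi.pow_apply]
    field_simp
    ring
  have hderiv2 : ∀ y, mkQ a t y ≠ 0 → deriv (deriv (U t)) y = mkF2 a t y := by
    intro y hy
    have hev : deriv (U t) =ᶠ[nhds y] fun w => mkF1 a t w := by
      filter_upwards [hSopen.mem_nhds hy] with w hw
      exact hderiv1 w hw
    rw [hev.deriv_eq]
    exact (hDF1 y hy).deriv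
  -- third x-derivative
  have hDF2 : HasDerivAt (fun w => mkF2 a t w)
      (-(12 * a * mkN3 a t x / (mkQ a t x)^4)) x := by
    unfold mkF2
    have h := (((hD_N2 a t x).const_mul (12 * a)).div ((hD_Q a t x).pow 3)
      (pow_ne_zero 3 hQx)).neg
    refine h.congr_deriv ?_
    unfold mkN3
    simp only [Pi.pow_apply]
    field_simp
    ring
  have hderiv3 : deriv (deriv (deriv (U t))) x = -(12 * a * mkN3 a t x / (mkQ a t x)^4) := by
    have hev : deriv (deriv (U t)) =ᶠ[nhds x] fun w => mkF2 a t w := by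
      filter_upwards [hSopen.mem_nhds hQx] with w hw
      exact hderiv2 w hw
    rw [hev.deriv_eq]
    exact hDF2.deriv
  have hiter : iteratedDeriv 3 (U t) = deriv (deriv (deriv (U t))) := by
    rw [show (3 : ℕ) = 2 + 1 from rfl, iteratedDeriv_succ,
      show (2 : ℕ) = 1 + 1 from rfl, iteratedDeriv_succ, iteratedDeriv_one]
  -- t-derivative
  have hw : HasDerivAt (fun s : ℝ => x - 6 * a^2 * s) (-(6 * a^2)) t := by
    have h := (hasDerivAt_const t x).sub ((hasDerivAt_id t).const_mul (6 * a^2))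
    refine h.congr_deriv ?_
    ring
  have h24 : HasDerivAt (fun s : ℝ => 24 * s) 24 t := by
    have h := (hasDerivAt_id t).const_mul (24 : ℝ)
    refine h.congr_deriv ?_
    ring
  have h12 : HasDerivAt (fun s : ℝ => 12 * s) 12 t := by
    have h := (hasDerivAt_id t).const_mul (12 : ℝ)
    refine h.congr_deriv ?_
    ring
  have hPt : HasDerivAt (fun s => mkP a s x)
      (-(6 * a^2) * mkP1 a t x - 24 * (x - 6 * a^2 * t)) t := by
    unfold mkP
    have h := (((hw.pow 4).add ((hw.pow 2).const_mul (3 / (2 * a^2)))).sub_const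
      (3 / (16 * a^4))).sub (h24.mul hw)
    refine h.congr_deriv ?_
    unfold mkP1
    ring
  have hQt : HasDerivAt (fun s => mkQ a s x)
      (-(6 * a^2) * mkQ1 a t x + 96 * a^2 * mkG a t x) t := by
    unfold mkQ mkG mkH
    have hg := ((hw.pow 3).add h12).sub (hw.const_mul (3 / (4 * a^2)))
    have h := ((hg.pow 2).const_mul (4 * a^2)).add
      (((hw.pow 2).add_const (1 / (4 * a^2))).pow 2 |>.const_mul 9)
    refine h.congr_deriv ?_
    unfold mkQ1 mkG1 mkG mkH mkH1
    simp only [Pi.pow_apply, Pi.add_apply, Pi.sub_apply]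
    ring
  have hUt : HasDerivAt (fun s => U s x)
      (-(12 * a * ((-(6 * a^2) * mkP1 a t x - 24 * (x - 6 * a^2 * t)) * mkQ a t x
        - mkP a t x * (-(6 * a^2) * mkQ1 a t x + 96 * a^2 * mkG a t x))
        / (mkQ a t x)^2)) t := by
    have hUteq : (fun s => U s x) = fun s => a - 12 * a * mkP a s x / mkQ a s x := by
      funext s
      rw [hU s x, hz s x]
      unfold mkP mkQ mkG mkH
      rfl
    rw [hUteq]
    have h := (hasDerivAt_const t a).sub ((hPt.const_mul (12 * a)).div hQt hQx)
    refine h.congr_deriv ?_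
    ring
  -- assemble
  rw [hUt.deriv, hderiv1 x hQx, hiter, hderiv3,
    show U t x = a - 12 * a * mkP a t x / mkQ a t x from by rw [hUeq]]
  unfold mkF1
  have key : ∀ Pv Qv N1v N3v VPv VQv : ℝ, Qv ≠ 0 →
      (VPv * Qv - Pv * VQv) * Qv^2 + 6 * (a * Qv - 12 * a * Pv)^2 * N1v + N3v = 0 →
      -(12 * a * (VPv * Qv - Pv * VQv) / Qv^2)
        + 6 * (a - 12 * a * Pv / Qv)^2 * -(12 * a * N1v / Qv^2)
        + -(12 * a * N3v / Qv^4) = 0 := by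
    intro Pv Qv N1v N3v VPv VQv hQ hM
    have e : -(12 * a * (VPv * Qv - Pv * VQv) / Qv^2)
        + 6 * (a - 12 * a * Pv / Qv)^2 * -(12 * a * N1v / Qv^2)
        + -(12 * a * N3v / Qv^4)
        = -(12 * a) * (((VPv * Qv - Pv * VQv) * Qv^2
            + 6 * (a * Qv - 12 * a * Pv)^2 * N1v + N3v) / Qv^4) := by
      field_simp
      ring
    rw [e, hM]
    simp
  have hM : ((-(6 * a^2) * mkP1 a t x - 24 * (x - 6 * a^2 * t)) * mkQ a t x
        - mkP a t x * (-(6 * a^2) * mkQ1 a t x + 96 * a^2 * mkG a t x)) * (mkQ a t x)^2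
      + 6 * (a * mkQ a t x - 12 * a * mkP a t x)^2 * mkN1 a t x + mkN3 a t x = 0 := by
    unfold mkN3 mkN2d mkN2 mkN1dd mkN1d mkN1 mkP3 mkP2 mkP1 mkP mkQ3 mkQ2 mkQ1 mkQ
      mkG1 mkH1 mkG mkH
    field_simp
    ring
  exact key (mkP a t x) (mkQ a t x) (mkN1 a t x) (mkN3 a t x)
    (-(6 * a^2) * mkP1 a t x - 24 * (x - 6 * a^2 * t))
    (-(6 * a^2) * mkQ1 a t x + 96 * a^2 * mkG a t x) hQx hM
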